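/- arXiv:math/0502294 — 6 statements merged into one kernel-verified Lean document; each statement's English description precedes it below -/
import Mathlib

section
/- In the spider-web crossbar graph G_{b,k,l} with base b ≥ 2, scale k ≥ 1 and depth l ≥ k, the number of directed paths from any given input to any given output equals b^{l-k}. -/
/-- `stepOK b k l u` : consecutive labels along `u` differ at most in position
`j ≡ m (mod k)` at stage `m` (stages 1-indexed; positions 0-indexed, so the
position changed at stage `m` has 0-based index `(m-1) % k`). -/
def stepOK (b k l : ℕ) (u : Fin (l + 1) → Fin k → Fin b) : Prop :=
  ∀ m : Fin l, ∀ i : Fin k, (i : ℕ) ≠ (m : ℕ) % k → u m.castSucc i = u m.succ i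

/-- Paths from input `v` (rank 0) to output `w` (rank `l`) in the spider-web
crossbar graph `G_{b,k,l}`. -/
def SpiderPath (b k l : ℕ) (v w : Fin k → Fin b) : Type :=
  { u : Fin (l + 1) → Fin k → Fin b // u 0 = v ∧ u (Fin.last l) = w ∧ stepOK b k l u }

instance spiderPathFinite (b k l : ℕ) (v w : Fin k → Fin b) :
    Finite (SpiderPath b k l v w) := by
  unfold SpiderPath; infer_instance

lemma sigma_subtype_ext {b k l : ℕ} {v : Fin k → Fin b} {W : Fin b → (Fin k → Fin b)}
    (s t : Σ x : Fin b, SpiderPath b k l v (W x))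
    (h1 : s.1 = t.1) (h2 : s.2.1 = t.2.1) : s = t := by
  obtain ⟨x, u⟩ := s; obtain ⟨y, t'⟩ := t
  simp only at h1
  cases h1
  exact congrArg _ (Subtype.ext h2)

/-- the unique path when `l = k` -/
lemma base_card (b k : ℕ) (hk : 1 ≤ k) (v w : Fin k → Fin b) :
    Nat.card (SpiderPath b k k v w) = 1 := by
  rw [Nat.card_eq_one_iff_unique]
  -- the canonical path
  set u₀ : Fin (k + 1) → Fin k → Fin b :=
    fun m i => if (i : ℕ) < (m : ℕ) then w i else v i with hu₀
  have key : ∀ p : SpiderPath b k k v w, p.1 = u₀ := by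
    rintro ⟨u, h0, hl, hs⟩
    have claim1 : ∀ n (hn : n ≤ k), ∀ i : Fin k, n ≤ (i : ℕ) →
        u ⟨n, Nat.lt_succ_of_le hn⟩ i = v i := by
      intro n
      induction n with
      | zero =>
        intro hn i _
        rw [show (⟨0, Nat.lt_succ_of_le hn⟩ : Fin (k+1)) = 0 from by ext; simp]
        exact congrFun h0 i
      | succ n ih =>
        intro hn i hi
        have hnk : n < k := lt_of_lt_of_le (Nat.lt_succ_self n) hn
        have hstep := hs ⟨n, hnk⟩ i
          (by simpa [Nat.mod_eq_of_lt hnk] using (by omega : (i : ℕ) ≠ n))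
        have h1 : (Fin.castSucc (⟨n, hnk⟩ : Fin k)) = ⟨n, Nat.lt_succ_of_le (le_of_lt hnk)⟩ := rfl
        have h2 : (Fin.succ (⟨n, hnk⟩ : Fin k)) = ⟨n + 1, Nat.succ_lt_succ hnk⟩ := rfl
        rw [h1, h2] at hstep
        rw [show (⟨n + 1, Nat.lt_succ_of_le hn⟩ : Fin (k+1)) = ⟨n+1, Nat.succ_lt_succ hnk⟩ from rfl,
          ← hstep]
        exact ih (le_of_lt hnk) i (by omega)
    have claim2 : ∀ d, ∀ i : Fin k, (i : ℕ) < k - d →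
        u ⟨k - d, Nat.lt_succ_of_le (Nat.sub_le _ _)⟩ i = w i := by
      intro d
      induction d with
      | zero =>
        intro i hi
        have he : (⟨k - 0, Nat.lt_succ_of_le (Nat.sub_le _ _)⟩ : Fin (k+1)) = Fin.last k := by
          ext; simp
        rw [he]
        exact congrFun hl i
      | succ d ih =>
        intro i hi
        have hdk : d < k := by omega
        set n := k - (d + 1) with hn
        have hnk : n < k := by omega
        have hstep := hs ⟨n, hnk⟩ i
          (by simpa [Nat.mod_eq_of_lt hnk] using (by omega : (i : ℕ) ≠ n))
        have h1 : (Fin.castSucc (⟨n, hnk⟩ : Fin k)) = ⟨n, Nat.lt_succ_of_le (le_of_lt hnk)⟩ := rfl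
        have h2 : (Fin.succ (⟨n, hnk⟩ : Fin k)) = ⟨n + 1, Nat.succ_lt_succ hnk⟩ := rfl
        rw [h1, h2] at hstep
        have h3 : (⟨n + 1, Nat.succ_lt_succ hnk⟩ : Fin (k+1)) =
            ⟨k - d, Nat.lt_succ_of_le (Nat.sub_le _ _)⟩ := by ext; simp; omega
        rw [h3] at hstep
        rw [show (⟨k - (d+1), Nat.lt_succ_of_le (Nat.sub_le _ _)⟩ : Fin (k+1))
            = ⟨n, Nat.lt_succ_of_le (le_of_lt hnk)⟩ from rfl, hstep]
        exact ih i (by omega)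
    funext m i
    rw [hu₀]
    by_cases h : (i : ℕ) < (m : ℕ)
    · simp only [if_pos h]
      have hm : (m : ℕ) ≤ k := Nat.lt_succ_iff.mp m.isLt
      have hres := claim2 (k - (m : ℕ)) i (by omega)
      rwa [show (⟨k - (k - (m : ℕ)), Nat.lt_succ_of_le (Nat.sub_le _ _)⟩ : Fin (k+1)) = m by
        ext; simp; omega] at hres
    · simp only [if_neg h]
      have hres := claim1 (m : ℕ) (Nat.lt_succ_iff.mp m.isLt) i (by omega)
      rwa [show (⟨(m : ℕ), Nat.lt_succ_of_le (Nat.lt_succ_iff.mp m.isLt)⟩ : Fin (k+1)) = m by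
        ext; simp] at hres
  refine ⟨⟨fun p q => Subtype.ext ((key p).trans (key q).symm)⟩, ⟨⟨u₀, ?_, ?_, ?_⟩⟩⟩
  · funext i; simp [hu₀]
  · funext i; simp [hu₀, Fin.last, i.isLt]
  · intro m i hi
    have hmk : (m : ℕ) < k := m.isLt
    rw [Nat.mod_eq_of_lt hmk] at hi
    simp only [hu₀, Fin.coe_castSucc, Fin.val_succ]
    have : ((i : ℕ) < (m : ℕ)) ↔ ((i : ℕ) < (m : ℕ) + 1) := by omega
    simp [this]

/-- dropping the last stage -/
def stepEquiv (b k l : ℕ) (hk : 1 ≤ k) (v w : Fin k → Fin b) :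
    SpiderPath b k (l + 1) v w ≃
      Σ x : Fin b, SpiderPath b k l v
        (Function.update w ⟨l % k, Nat.mod_lt l hk⟩ x) := by
  set p : Fin k := ⟨l % k, Nat.mod_lt l hk⟩ with hp
  refine
    { toFun := fun q => ⟨q.1 (Fin.castSucc (Fin.last l)) p,
        ⟨fun j => q.1 (Fin.castSucc j), ?_⟩⟩
      invFun := fun s => ⟨Fin.snoc s.2.1 w, ?_⟩
      left_inv := ?_
      right_inv := ?_ }
  · obtain ⟨u, h0, hl, hs⟩ := q
    refine ⟨by simpa using h0, ?_, ?_⟩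
    · funext i
      by_cases hip : i = p
      · subst hip; simp
      · have hipn : (i : ℕ) ≠ l % k := fun h => hip (Fin.ext h)
        have hstep := hs (Fin.last l) i (by simpa using hipn)
        rw [Fin.succ_last] at hstep
        simp only [Function.update_of_ne hip]
        rw [hstep]
        exact congrFun hl i
    · intro m i hi
      have h2 : Fin.castSucc (Fin.succ m) = Fin.succ (Fin.castSucc m) := by ext; simp
      simp only [h2]
      exact hs (Fin.castSucc m) i (by simpa using hi)
  · obtain ⟨x, u, h0, hl, hs⟩ := s
    refine ⟨?_, ?_, ?_⟩
    · rw [show (0 : Fin (l + 1 + 1)) = Fin.castSucc 0 from rfl, Fin.snoc_castSucc]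
      exact h0
    · exact Fin.snoc_last _ _
    · intro m i hi
      induction m using Fin.lastCases with
      | last =>
        rw [Fin.succ_last, Fin.snoc_last, Fin.snoc_castSucc]
        show u (Fin.last l) i = w i
        rw [hl]
        have hip : i ≠ p := fun h => hi (by rw [h, hp]; simp)
        exact Function.update_of_ne hip x w
      | cast m =>
        have h2 : Fin.succ (Fin.castSucc m) = Fin.castSucc (Fin.succ m) := by ext; simp
        rw [h2, Fin.snoc_castSucc, Fin.snoc_castSucc]
        exact hs m i (by simpa using hi)
  · rintro ⟨u, h0, hl, hs⟩
    apply Subtype.ext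
    show Fin.snoc (fun j => u (Fin.castSucc j)) w = u
    funext j
    induction j using Fin.lastCases with
    | last => rw [Fin.snoc_last]; exact hl.symm
    | cast j => rw [Fin.snoc_castSucc]
  · rintro ⟨x, u, h0, hl, hs⟩
    apply sigma_subtype_ext (W := fun x => Function.update w p x)
    · show (Fin.snoc u w : Fin (l+1+1) → Fin k → Fin b) (Fin.castSucc (Fin.last l)) p = x
      rw [Fin.snoc_castSucc, hl]
      simp
    · show (fun j => (Fin.snoc u w : Fin (l+1+1) → Fin k → Fin b) (Fin.castSucc j)) = u
      funext j; rw [Fin.snoc_castSucc]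

theorem spiderweb_path_count (b k l : ℕ) (hb : 2 ≤ b) (hk : 1 ≤ k) (hl : k ≤ l)
    (v w : Fin k → Fin b) :
    Nat.card (SpiderPath b k l v w) = b ^ (l - k) := by
  induction l, hl using Nat.le_induction generalizing w with
  | base => simpa using base_card b k hk v w
  | succ l hl ih =>
    classical
    rw [Nat.card_congr (stepEquiv b k l hk v w)]
    haveI : ∀ x : Fin b, Fintype (SpiderPath b k l v
        (Function.update w ⟨l % k, Nat.mod_lt l hk⟩ x)) := fun x => Fintype.ofFinite _
    rw [Nat.card_eq_fintype_card, Fintype.card_sigma]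
    have hcard : ∀ x : Fin b, Fintype.card (SpiderPath b k l v
        (Function.update w ⟨l % k, Nat.mod_lt l hk⟩ x)) = b ^ (l - k) := by
      intro x
      rw [← Nat.card_eq_fintype_card]
      exact ih (Function.update w _ x)
    simp only [hcard, Finset.sum_const, Finset.card_univ, Fintype.card_fin, smul_eq_mul]
    rw [show l + 1 - k = (l - k) + 1 by omega, pow_succ, mul_comm]
end

section
/- In the spider-web crossbar graph G_{b,k,l} with base b ≥ 2, scale k ≥ 1 and depth l < k, any given input and output are joined by at most one path; moreover there is exactly one path joining them if their labels agree in the last k-l positions, and no path otherwise. -/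
lemma spider_fwd {b k l : ℕ} (hl : l < k) (u : Fin (l + 1) → Fin k → Fin b)
    (hs : stepOK b k l u) :
    ∀ m : ℕ, (hm : m ≤ l) → ∀ i : Fin k, m ≤ (i : ℕ) →
      u ⟨m, Nat.lt_succ_of_le hm⟩ i = u 0 i := by
  intro m
  induction m with
  | zero => intro _ i _; rfl
  | succ n ih =>
    intro hm i hi
    have hn : n < l := hm
    have hmod : (n : ℕ) % k = n := Nat.mod_eq_of_lt (hn.trans hl)
    have hstep := hs ⟨n, hn⟩ i (by simp only [hmod]; omega)
    have h1 : (Fin.castSucc ⟨n, hn⟩ : Fin (l + 1)) = ⟨n, by omega⟩ := rfl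
    have h2 : (Fin.succ ⟨n, hn⟩ : Fin (l + 1)) = ⟨n + 1, by omega⟩ := rfl
    rw [h1, h2] at hstep
    rw [← hstep]
    exact ih (le_of_lt hn) i (by omega)

lemma spider_bwd {b k l : ℕ} (hl : l < k) (u : Fin (l + 1) → Fin k → Fin b)
    (hs : stepOK b k l u) :
    ∀ t : ℕ, t ≤ l → ∀ i : Fin k, (i : ℕ) < l - t →
      u ⟨l - t, by omega⟩ i = u (Fin.last l) i := by
  intro t
  induction t with
  | zero => intro _ i _; rfl
  | succ n ih =>
    intro ht i hi
    have hm : l - (n + 1) < l := by omega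
    have hmod : (l - (n + 1)) % k = l - (n + 1) := Nat.mod_eq_of_lt (hm.trans hl)
    have hstep := hs ⟨l - (n + 1), hm⟩ i (by simp only [hmod]; omega)
    have h1 : (Fin.castSucc ⟨l - (n + 1), hm⟩ : Fin (l + 1)) = ⟨l - (n + 1), by omega⟩ := rfl
    have h2 : (Fin.succ ⟨l - (n + 1), hm⟩ : Fin (l + 1)) = ⟨l - n, by omega⟩ := by
      apply Fin.ext; simp [Fin.succ]; omega
    rw [h1, h2] at hstep
    rw [hstep]
    exact ih (by omega) i (by omega)

lemma spider_subsingleton {b k l : ℕ} (hl : l < k) (v w : Fin k → Fin b) :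
    Subsingleton (SpiderPath b k l v w) := by
  constructor
  rintro ⟨u, h0, hw, hs⟩ ⟨u', h0', hw', hs'⟩
  apply Subtype.ext
  funext m i
  have key : ∀ (uu : Fin (l + 1) → Fin k → Fin b), uu 0 = v → uu (Fin.last l) = w →
      stepOK b k l uu → uu m i = if (i : ℕ) < (m : ℕ) then w i else v i := by
    intro uu hv0 hwl hss
    by_cases h : (i : ℕ) < (m : ℕ)
    · rw [if_pos h, ← hwl]
      have hm : (m : ℕ) ≤ l := Nat.lt_succ_iff.mp m.isLt
      have := spider_bwd hl uu hss (l - (m : ℕ)) (by omega) i (by omega)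
      have hme : (⟨l - (l - (m : ℕ)), by omega⟩ : Fin (l + 1)) = m := by
        apply Fin.ext; simp; omega
      rw [hme] at this
      exact this
    · rw [if_neg h, ← hv0]
      have hm : (m : ℕ) ≤ l := Nat.lt_succ_iff.mp m.isLt
      have := spider_fwd hl uu hss (m : ℕ) hm i (by omega)
      have hme : (⟨(m : ℕ), Nat.lt_succ_of_le hm⟩ : Fin (l + 1)) = m := Fin.eta m _
      rw [hme] at this
      exact this
  simp only [key u h0 hw hs, key u' h0' hw' hs']

lemma spider_exists {b k l : ℕ} (hl : l < k) (v w : Fin k → Fin b)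
    (h : ∀ i : Fin k, l ≤ (i : ℕ) → v i = w i) :
    Nonempty (SpiderPath b k l v w) := by
  refine ⟨⟨fun m i => if (i : ℕ) < (m : ℕ) then w i else v i, ?_, ?_, ?_⟩⟩
  · funext i; simp
  · funext i
    simp only [Fin.val_last]
    by_cases hi : (i : ℕ) < l
    · rw [if_pos hi]
    · rw [if_neg hi, h i (by omega)]
  · intro m i hi
    have hmod : (m : ℕ) % k = (m : ℕ) := Nat.mod_eq_of_lt (m.isLt.trans hl)
    rw [hmod] at hi
    simp only [Fin.coe_castSucc, Fin.val_succ]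
    by_cases hlt : (i : ℕ) < (m : ℕ)
    · rw [if_pos hlt, if_pos (by omega)]
    · rw [if_neg hlt, if_neg (by omega)]

lemma spider_not_exists {b k l : ℕ} (hl : l < k) (v w : Fin k → Fin b)
    (h : ¬ ∀ i : Fin k, l ≤ (i : ℕ) → v i = w i) :
    IsEmpty (SpiderPath b k l v w) := by
  constructor
  rintro ⟨u, h0, hw, hs⟩
  push_neg at h
  obtain ⟨i, hli, hne⟩ := h
  apply hne
  have := spider_fwd hl u hs l le_rfl i hli
  have hle : (⟨l, Nat.lt_succ_of_le le_rfl⟩ : Fin (l + 1)) = Fin.last l := rfl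
  rw [hle, hw, h0] at this
  exact this.symm

theorem spiderweb_shallow_path_count (b k l : ℕ) (hb : 2 ≤ b) (hk : 1 ≤ k)
    (hl : l < k) (v w : Fin k → Fin b) :
    Nat.card (SpiderPath b k l v w) ≤ 1 ∧
    ((∀ i : Fin k, l ≤ (i : ℕ) → v i = w i) →
      Nat.card (SpiderPath b k l v w) = 1) ∧
    ((¬ ∀ i : Fin k, l ≤ (i : ℕ) → v i = w i) →
      Nat.card (SpiderPath b k l v w) = 0) := by
  have hss := spider_subsingleton hl v w
  refine ⟨?_, ?_, ?_⟩
  · by_cases hne : Nonempty (SpiderPath b k l v w)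
    · exact le_of_eq Nat.card_unique
    · have : IsEmpty (SpiderPath b k l v w) := not_nonempty_iff.mp hne
      rw [Nat.card_of_isEmpty]; omega
  · intro h
    have := spider_exists hl v w h
    exact Nat.card_unique
  · intro h
    have := spider_not_exists hl v w h
    exact Nat.card_of_isEmpty
end

section
/- The automorphism group of the spider-web crossbar graph G_{b,k,l} acts transitively on the set of directed paths from inputs to outputs. -/
/-- Adjacency in the spider-web graph `G_{b,k,l}` on the vertex set
`Fin (l+1) × (Fin k → Fin b)` (rank, label): there is an edge of stage `m+1`
from a rank-`m` vertex to a rank-`(m+1)` vertex iff their labels differ at most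
in the position with 0-based index `m % k`. -/
def SpiderAdj (b k l : ℕ) (x y : Fin (l + 1) × (Fin k → Fin b)) : Prop :=
  ∃ m : Fin l, x.1 = m.castSucc ∧ y.1 = m.succ ∧
    ∀ i : Fin k, (i : ℕ) ≠ (m : ℕ) % k → x.2 i = y.2 i

/-- The automorphism group of `G_{b,k,l}` (rank-preserving adjacency-preserving
permutations of the vertices) acts transitively on input-to-output paths. -/
theorem spiderweb_aut_transitive_on_paths (b k l : ℕ) (hb : 2 ≤ b) (hk : 1 ≤ k)
    (u u' : Fin (l + 1) → Fin k → Fin b)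
    (hu : stepOK b k l u) (hu' : stepOK b k l u') :
    ∃ θ : (Fin (l + 1) × (Fin k → Fin b)) ≃ (Fin (l + 1) × (Fin k → Fin b)),
      (∀ x, (θ x).1 = x.1) ∧
      (∀ x y, SpiderAdj b k l x y ↔ SpiderAdj b k l (θ x) (θ y)) ∧
      (∀ m : Fin (l + 1), θ (m, u m) = (m, u' m)) := by
  haveI : NeZero b := ⟨by omega⟩
  set δ : Fin (l + 1) → Fin k → Fin b := fun m i => u' m i - u m i with hδ
  have hδstep : ∀ m : Fin l, ∀ i : Fin k, (i : ℕ) ≠ (m : ℕ) % k →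
      δ m.castSucc i = δ m.succ i := by
    intro m i hi
    simp only [hδ, hu m i hi, hu' m i hi]
  refine ⟨⟨fun p => (p.1, fun i => p.2 i + δ p.1 i),
           fun p => (p.1, fun i => p.2 i - δ p.1 i), ?_, ?_⟩, ?_, ?_, ?_⟩
  · intro p; ext i <;> simp
  · intro p; ext i <;> simp
  · intro x; rfl
  · intro x y
    constructor
    · rintro ⟨m, hx, hy, h⟩
      refine ⟨m, by simpa using hx, by simpa using hy, ?_⟩
      intro i hi
      simp only [Equiv.coe_fn_mk, hx, hy, h i hi, hδstep m i hi]
    · rintro ⟨m, hx, hy, h⟩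
      simp only [Equiv.coe_fn_mk] at hx hy h
      refine ⟨m, hx, hy, ?_⟩
      intro i hi
      have := h i hi
      rw [hx, hy, hδstep m i hi] at this
      exact add_right_cancel this
  · intro m
    ext i
    · rfl
    · simp [hδ]
end

section
/- The graph G*_{b,k,l} obtained from the spider-web graph G_{b,k,l} by reversing all edge directions and exchanging inputs with outputs is isomorphic to G_{b,k,l}; explicitly, the map sending the vertex labelled a_1⋯a_k in rank m of G_{b,k,l} to the vertex labelled a*_1⋯a*_k in rank l-m, where a*_i = a_j with j ≡ l+1-i (mod k), is an isomorphism. -/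
/-- The reversal map: the vertex labelled `a_1 ⋯ a_k` in rank `m` is sent to the
vertex labelled `a*_1 ⋯ a*_k` in rank `l - m`, where `a*_i = a_j` with
`j ≡ l + 1 - i (mod k)` (1-indexed positions; in 0-indexed form the position
`i` of the image is position `(l + (k - 1 - i)) % k` of the original). -/
def revMap (b k l : ℕ) :
    Fin (l + 1) × (Fin k → Fin b) → Fin (l + 1) × (Fin k → Fin b) :=
  fun x =>
    (⟨l - (x.1 : ℕ), by have := x.1.isLt; omega⟩,
     fun i => x.2 ⟨(l + (k - 1 - (i : ℕ))) % k, Nat.mod_lt _ i.pos⟩)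

private lemma f_invol {k : ℕ} (l : ℕ) {i : ℕ} (hk : 0 < k) (hi : i < k) :
    (l + (k - 1 - (l + (k - 1 - i)) % k)) % k = i := by
  have hq := Nat.div_add_mod (l + (k - 1 - i)) k
  have hf : (l + (k - 1 - i)) % k < k := Nat.mod_lt _ hk
  have key : l + (k - 1 - (l + (k - 1 - i)) % k)
      = i + k * ((l + (k - 1 - i)) / k) := by
    generalize (l + (k - 1 - i)) % k = f at hq hf ⊢
    generalize (l + (k - 1 - i)) / k = q at hq ⊢
    generalize k * q = t at hq ⊢
    omega
  rw [key, Nat.add_mul_mod_self_left, Nat.mod_eq_of_lt hi]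

private lemma f_shift {k l m : ℕ} (hk : 0 < k) (hm : m < l) :
    (l + (k - 1 - m % k)) % k = (l - m - 1) % k := by
  have hq := Nat.div_add_mod m k
  have hr : m % k < k := Nat.mod_lt _ hk
  have key : l + (k - 1 - m % k) = (l - m - 1) + k * (m / k + 1) := by
    rw [Nat.mul_add, Nat.mul_one]
    generalize m % k = r at hq hr ⊢
    generalize m / k = q at hq ⊢
    generalize k * q = t at hq ⊢
    omega
  rw [key, Nat.add_mul_mod_self_left]

private lemma rev_invol (b k l : ℕ) : Function.Involutive (revMap b k l) := by
  rintro ⟨⟨m, hm⟩, a⟩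
  unfold revMap
  refine Prod.ext (Fin.ext ?_) (funext fun i => ?_)
  · simp only
    omega
  · exact congrArg a (Fin.ext (f_invol l i.pos i.isLt))

/-- `G*_{b,k,l}`, the reversal of `G_{b,k,l}`, is isomorphic to `G_{b,k,l}`
via the explicit map `revMap`: it is a bijection on vertices carrying the edges
of `G_{b,k,l}` to the reversed edges. -/
theorem spiderweb_reversal_iso (b k l : ℕ) (hb : 2 ≤ b) (hk : 1 ≤ k) :
    Function.Bijective (revMap b k l) ∧
    ∀ x y, SpiderAdj b k l x y ↔ SpiderAdj b k l (revMap b k l y) (revMap b k l x) := by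
  have hinv := rev_invol b k l
  have fwd : ∀ x y, SpiderAdj b k l x y →
      SpiderAdj b k l (revMap b k l y) (revMap b k l x) := by
    rintro x y ⟨m, hx, hy, hlab⟩
    have hml := m.isLt
    refine ⟨⟨l - (m : ℕ) - 1, by omega⟩, Fin.ext ?_, Fin.ext ?_, ?_⟩
    · simp only [revMap, Fin.coe_castSucc]
      rw [hy]
      simp only [Fin.val_succ]
      omega
    · simp only [revMap, Fin.val_succ]
      rw [hx]
      simp only [Fin.coe_castSucc]
      omega
    · intro i hi
      simp only at hi
      refine (hlab ⟨(l + (k - 1 - (i : ℕ))) % k, Nat.mod_lt _ i.pos⟩ ?_).symm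
      simp only
      intro hcon
      apply hi
      have h1 := f_invol l i.pos i.isLt
      rw [hcon, f_shift i.pos hml] at h1
      exact h1.symm
  refine ⟨hinv.bijective, fun x y => ⟨fwd x y, fun h => ?_⟩⟩
  have := fwd _ _ h
  rwa [hinv x, hinv y] at this
end

section
/- Let Σ be the alphabet of unoverlined digits B = {0,…,b-1} together with overlined digits B̄ = {0̄,…,(b-1)̄}, and let B' = {1,…,b-1}, B̄' = {1̄,…,(b-1)̄}. The regular expression ((Λ + (B̄'(Λ + 0̄ + ⋯ + 0̄^{k-1}))* B̄' 0̄^{k-1}) 0)* is unambiguous: every word it describes has a unique parse, where each stretch ends with an unoverlined 0, each stretch optionally begins with an excursion, each excursion consists of zero or more preliminary segments (a digit from B̄' followed by at most k-1 copies of 0̄) followed by a final segment (a digit from B̄' followed by exactly k-1 copies of 0̄). -/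
/-- The alphabet `B ∪ B̄`: `Sum.inl d` is the unoverlined digit `d`,
`Sum.inr d` is the overlined digit `d̄`. -/
abbrev OverAlphabet (b : ℕ) := Fin b ⊕ Fin b

/-- The word of a segment `(d, j)`: an overlined digit `d̄` followed by `j`
overlined zeros. (For validity, `d ≠ 0`.) -/
def segWord (b : ℕ) [NeZero b] (s : Fin b × ℕ) : List (OverAlphabet b) :=
  Sum.inr s.1 :: List.replicate s.2 (Sum.inr 0)

/-- The word of a stretch, given by its (possibly empty) list of segments
forming an excursion, followed by an unoverlined `0`. -/
def stretchWord (b : ℕ) [NeZero b] (s : List (Fin b × ℕ)) : List (OverAlphabet b) :=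
  s.flatMap (segWord b) ++ [Sum.inl 0]

/-- The word of a parse: the concatenation of its stretches. -/
def parseWord (b : ℕ) [NeZero b] (p : List (List (Fin b × ℕ))) : List (OverAlphabet b) :=
  p.flatMap (stretchWord b)

/-- A parse is valid when in each stretch every segment starts with a digit from
`B̄' = {1̄,…,(b-1)̄}` followed by at most `k-1` overlined zeros (a preliminary
segment), and the last segment of a nonempty excursion has exactly `k-1`
overlined zeros (the final segment). -/
def ValidParse (b k : ℕ) [NeZero b] (p : List (List (Fin b × ℕ))) : Prop :=
  ∀ s ∈ p, (∀ seg ∈ s, seg.1 ≠ 0 ∧ seg.2 ≤ k - 1) ∧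
    ∀ h : s ≠ [], (s.getLast h).2 = k - 1

-- auxiliary lemmas
section Aux

variable {α : Type*}

lemma rep_cancel : ∀ (j i : ℕ) (A B : List α) (z : α),
    A.head? ≠ some z → B.head? ≠ some z →
    List.replicate j z ++ A = List.replicate i z ++ B → j = i ∧ A = B := by
  intro j
  induction j with
  | zero =>
    intro i A B z hA hB h
    cases i with
    | zero => exact ⟨rfl, h⟩
    | succ i =>
      exfalso
      simp [List.replicate_succ] at h
      subst h
      simp at hA
  | succ j ih =>
    intro i A B z hA hB h
    cases i with
    | zero =>
      exfalso
      simp [List.replicate_succ] at h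
      rw [← h] at hB
      simp at hB
    | succ i =>
      simp only [List.replicate_succ, List.cons_append, List.cons.injEq] at h
      obtain ⟨hji, hAB⟩ := ih i A B z hA hB h.2
      exact ⟨by omega, hAB⟩

lemma sep_cancel : ∀ (u v X Y : List α) (z : α),
    (∀ x ∈ u, x ≠ z) → (∀ x ∈ v, x ≠ z) →
    u ++ z :: X = v ++ z :: Y → u = v ∧ X = Y := by
  intro u
  induction u with
  | nil =>
    intro v X Y z hu hv h
    cases v with
    | nil => simpa using h
    | cons a v =>
      exfalso
      simp at h
      exact hv a (by simp) h.1.symm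
  | cons a u ih =>
    intro v X Y z hu hv h
    cases v with
    | nil =>
      exfalso
      simp at h
      exact hu a (by simp) h.1
    | cons c v =>
      simp only [List.cons_append, List.cons.injEq] at h
      obtain ⟨huv, hXY⟩ := ih v X Y z (fun x hx => hu x (by simp [hx]))
        (fun x hx => hv x (by simp [hx])) h.2
      exact ⟨by rw [h.1, huv], hXY⟩

end Aux

lemma flatMap_head {b : ℕ} [NeZero b] (s : List (Fin b × ℕ))
    (hs : ∀ seg ∈ s, seg.1 ≠ 0) :
    (s.flatMap (segWord b)).head? ≠ some (Sum.inr (0 : Fin b)) := by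
  cases s with
  | nil => simp
  | cons seg s =>
    simp only [List.flatMap_cons, segWord, List.cons_append, List.head?_cons]
    intro h
    exact hs seg (by simp) (by simpa using h)

lemma seg_inj {b : ℕ} [NeZero b] : ∀ (s t : List (Fin b × ℕ)),
    (∀ seg ∈ s, seg.1 ≠ 0) → (∀ seg ∈ t, seg.1 ≠ 0) →
    s.flatMap (segWord b) = t.flatMap (segWord b) → s = t := by
  intro s
  induction s with
  | nil =>
    intro t hs ht h
    cases t with
    | nil => rfl
    | cons seg t => simp [segWord] at h
  | cons seg s ih =>
    intro t hs ht h
    cases t with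
    | nil => simp [segWord] at h
    | cons seg' t =>
      obtain ⟨d, j⟩ := seg
      obtain ⟨e, i⟩ := seg'
      simp only [List.flatMap_cons, segWord, List.cons_append, List.cons.injEq,
        Sum.inr.injEq] at h
      obtain ⟨hde, h2⟩ := h
      obtain ⟨hji, h3⟩ := rep_cancel j i _ _ _
        (flatMap_head s (fun x hx => hs x (by simp [hx])))
        (flatMap_head t (fun x hx => ht x (by simp [hx]))) h2
      rw [hde, hji, ih t (fun x hx => hs x (by simp [hx]))
        (fun x hx => ht x (by simp [hx])) h3]

lemma flatMap_ne_inl {b : ℕ} [NeZero b] (s : List (Fin b × ℕ)) :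
    ∀ x ∈ s.flatMap (segWord b), x ≠ Sum.inl (0 : Fin b) := by
  intro x hx
  simp only [List.mem_flatMap] at hx
  obtain ⟨seg, _, hx⟩ := hx
  simp only [segWord, List.mem_cons, List.mem_replicate] at hx
  rcases hx with h | h
  · simp [h]
  · simp [h.2]

theorem regular_expression_unambiguous' (b k : ℕ)
    [NeZero b] : ∀ (p q : List (List (Fin b × ℕ))),
    ValidParse b k p → ValidParse b k q →
    parseWord b p = parseWord b q → p = q := by
  intro p
  induction p with
  | nil =>
    intro q hp hq hw
    cases q with
    | nil => rfl
    | cons s q => simp [parseWord, stretchWord] at hw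
  | cons s p ih =>
    intro q hp hq hw
    cases q with
    | nil => simp [parseWord, stretchWord] at hw
    | cons t q =>
      simp only [parseWord, List.flatMap_cons, stretchWord] at hw
      rw [List.append_assoc, List.append_assoc] at hw
      simp only [List.singleton_append] at hw
      obtain ⟨h1, h2⟩ := sep_cancel _ _ _ _ _ (flatMap_ne_inl s) (flatMap_ne_inl t) hw
      have hst : s = t := seg_inj s t
        (fun seg hseg => ((hp s (by simp)).1 seg hseg).1)
        (fun seg hseg => ((hq t (by simp)).1 seg hseg).1) h1
      rw [hst, ih q (fun x hx => hp x (by simp [hx])) (fun x hx => hq x (by simp [hx])) h2]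


/-- Unambiguity of the regular expression
`((Λ + (B̄'(Λ + 0̄ + ⋯ + 0̄^{k-1}))* B̄' 0̄^{k-1}) 0)*`:
every word it describes has a unique parse into stretches, excursions and
segments. -/
theorem regular_expression_unambiguous (b k : ℕ) (hb : 2 ≤ b) (hk : 1 ≤ k)
    [NeZero b] (p q : List (List (Fin b × ℕ)))
    (hp : ValidParse b k p) (hq : ValidParse b k q)
    (hw : parseWord b p = parseWord b q) : p = q := by
  exact regular_expression_unambiguous' b k p q hp hq hw
end

section
/- Let b ≥ 2 be an integer, 1/b < q < 1, and let ξ be the unique solution of x = (1 - q(1-x))^b in (0,1). Then as q → 1⁻, 1 - (1-ξ)^2 ∼ 2(1-q)^b; equivalently, lim_{q→1⁻} (1 - (1-ξ)^2) / (2(1-q)^b) = 1. -/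
open Filter

theorem linking_probability_asymptotics_q_to_one (b : ℕ) (hb : 2 ≤ b)
    (ξ : ℝ → ℝ)
    (hξ : ∀ q ∈ Set.Ioo (1 / (b : ℝ)) 1,
      ξ q ∈ Set.Ioo (0 : ℝ) 1 ∧ ξ q = (1 - q * (1 - ξ q)) ^ b) :
    Tendsto (fun q => (1 - (1 - ξ q) ^ 2) / (2 * (1 - q) ^ b))
      (nhdsWithin 1 (Set.Ioo (1 / (b : ℝ)) 1)) (nhds 1) := by
  have hb0 : b ≠ 0 := by omega
  have hbR : (0:ℝ) < (b:ℝ) := by exact_mod_cast (by omega : 0 < b)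
  -- key bounds on the fixed point
  have key : ∀ q ∈ Set.Ioo (1 / (b : ℝ)) 1,
      0 < ξ q ∧ ξ q < 1 ∧ (1-q)^b ≤ ξ q ∧ ξ q * q^b ≤ (1-q)^b := by
    intro q hq
    obtain ⟨⟨hx0, hx1⟩, hfix⟩ := hξ q hq
    have hq1 : q < 1 := hq.2
    have hq0 : 0 < q := (div_pos one_pos hbR).trans hq.1
    set x := ξ q with hx
    set t := 1 - q * (1 - x) with ht
    have ht0 : 0 < t := by rw [ht]; nlinarith
    have ht1 : t < 1 := by rw [ht]; nlinarith [mul_pos hq0 (sub_pos.2 hx1)]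
    have hxt : x = t ^ b := hfix
    have hLt : 1 - q ≤ t := by rw [ht]; nlinarith [mul_pos hq0 hx0]
    have hL : (1-q)^b ≤ x := by
      rw [hxt]; exact pow_le_pow_left₀ (by linarith) hLt b
    have htb : t ^ b ≤ t ^ 2 := pow_le_pow_of_le_one ht0.le ht1.le hb
    have e1 : 1 - t = q * (1 - x) := by rw [ht]; ring
    have h5 : q * (1 - t^2) ≤ 1 - t := by
      rw [e1, hxt]; nlinarith [htb, hq0]
    have hqt : q * t ≤ 1 - q := by
      nlinarith [h5, sub_pos.2 ht1, hq0]
    have hU : x * q^b ≤ (1-q)^b := by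
      calc x * q^b = (t*q)^b := by rw [hxt, mul_pow]
        _ ≤ (1-q)^b := pow_le_pow_left₀ (by positivity) (by nlinarith) b
    exact ⟨hx0, hx1, hL, hU⟩
  have hmem : ∀ᶠ q in nhdsWithin (1:ℝ) (Set.Ioo (1 / (b : ℝ)) 1),
      q ∈ Set.Ioo (1 / (b : ℝ)) 1 := self_mem_nhdsWithin
  -- lower bound eventually
  have hlow : ∀ᶠ q in nhdsWithin (1:ℝ) (Set.Ioo (1 / (b : ℝ)) 1),
      1 - (1-q)^b / (2 * q^b) ≤ (1 - (1 - ξ q) ^ 2) / (2 * (1 - q) ^ b) := by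
    filter_upwards [hmem] with q hq
    obtain ⟨hx0, hx1, hL, hU⟩ := key q hq
    have hq1 : q < 1 := hq.2
    have hq0 : 0 < q := (div_pos one_pos hbR).trans hq.1
    have hQ : (0:ℝ) < q^b := pow_pos hq0 b
    have hUu : (0:ℝ) < (1-q)^b := pow_pos (by linarith) b
    set x := ξ q
    set U := (1-q)^b
    set Q := q^b
    have e : 1 - U / (2*Q) = (2*Q - U) / (2*Q) := by field_simp
    rw [e, div_le_div_iff₀ (by positivity) (by positivity)]
    rcases le_or_gt U (2*Q) with hc | hc
    · nlinarith [mul_le_mul_of_nonneg_left hU hx0.le,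
        mul_nonneg (sub_nonneg.2 hL) (sub_nonneg.2 hc)]
    · nlinarith [mul_pos hUu hQ, mul_pos hx0 hQ, mul_nonneg (mul_nonneg hx0.le hx0.le) hQ.le]
  -- upper bound eventually
  have hupp : ∀ᶠ q in nhdsWithin (1:ℝ) (Set.Ioo (1 / (b : ℝ)) 1),
      (1 - (1 - ξ q) ^ 2) / (2 * (1 - q) ^ b) ≤ 1 / q^b := by
    filter_upwards [hmem] with q hq
    obtain ⟨hx0, hx1, hL, hU⟩ := key q hq
    have hq1 : q < 1 := hq.2
    have hq0 : 0 < q := (div_pos one_pos hbR).trans hq.1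
    have hQ : (0:ℝ) < q^b := pow_pos hq0 b
    have hUu : (0:ℝ) < (1-q)^b := pow_pos (by linarith) b
    rw [div_le_div_iff₀ (by positivity) hQ]
    nlinarith [mul_nonneg (mul_nonneg hx0.le hx0.le) hQ.le]
  -- limits of the bounding functions
  have hg1 : Tendsto (fun q : ℝ => 1 - (1-q)^b / (2 * q^b))
      (nhdsWithin (1:ℝ) (Set.Ioo (1 / (b : ℝ)) 1)) (nhds 1) := by
    have c : ContinuousAt (fun q : ℝ => 1 - (1-q)^b / (2 * q^b)) 1 := by
      apply ContinuousAt.sub continuousAt_const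
      exact ContinuousAt.div (by fun_prop) (by fun_prop) (by norm_num)
    have := c.tendsto
    norm_num [zero_pow hb0] at this
    exact this.mono_left nhdsWithin_le_nhds
  have hg2 : Tendsto (fun q : ℝ => 1 / q^b)
      (nhdsWithin (1:ℝ) (Set.Ioo (1 / (b : ℝ)) 1)) (nhds 1) := by
    have c : ContinuousAt (fun q : ℝ => 1 / q^b) 1 :=
      ContinuousAt.div continuousAt_const (by fun_prop) (by norm_num)
    have := c.tendsto
    norm_num at this
    simpa [one_div] using this.mono_left nhdsWithin_le_nhds
  exact tendsto_of_tendsto_of_tendsto_of_le_of_le' hg1 hg2 hlow hupp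
end
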